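/- In the point-circle incidence graph of a finite Möbius plane of order q, the distance between two distinct points is 2, the distance between a point P and a circle a is 1 if P lies on a and 3 otherwise, and the distance between two distinct circles is 2 if they meet and 4 if they are disjoint. -/

import Mathlib

open Finset

/-- A Möbius plane on a point type `P`: circles are finite point sets
satisfying the four Möbius plane axioms. -/
structure MobiusPlane (P : Type*) [DecidableEq P] where
  circles : Finset (Finset P)
  ax1 : ∀ A B C : P, A ≠ B → A ≠ C → B ≠ C →
    ∃! z, z ∈ circles ∧ A ∈ z ∧ B ∈ z ∧ C ∈ z
  ax2 : ∀ z ∈ circles, ∀ p ∈ z, ∀ q : P, q ∉ z →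
    ∃! z', z' ∈ circles ∧ p ∈ z' ∧ q ∈ z' ∧ z ∩ z' = {p}
  ax3 : circles.Nonempty ∧ ∀ z ∈ circles, 3 ≤ z.card
  ax4 : ∀ z ∈ circles, ∃ x : P, x ∉ z

/-- A finite Möbius plane has order `q` if every circle has exactly `q + 1` points. -/
def MobiusPlane.HasOrder {P : Type*} [DecidableEq P] (M : MobiusPlane P) (q : ℕ) : Prop :=
  ∀ z ∈ M.circles, z.card = q + 1

/-- The point–circle incidence graph of a Möbius plane: vertices are the points
and the circles, a point is adjacent to a circle iff it lies on it. -/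
def MobiusPlane.incGraph {P : Type*} [DecidableEq P] (M : MobiusPlane P) :
    SimpleGraph (P ⊕ {z // z ∈ M.circles}) where
  Adj v w :=
    (∃ p z, v = Sum.inl p ∧ w = Sum.inr z ∧ p ∈ z.1) ∨
    (∃ p z, v = Sum.inr z ∧ w = Sum.inl p ∧ p ∈ z.1)
  symm := by
    constructor
    intro v w h
    rcases h with ⟨p, z, h1, h2, h3⟩ | ⟨p, z, h1, h2, h3⟩
    · exact Or.inr ⟨p, z, h2, h1, h3⟩
    · exact Or.inl ⟨p, z, h2, h1, h3⟩
  loopless := by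
    constructor
    intro v h
    rcases h with ⟨p, z, h1, h2, _⟩ | ⟨p, z, h1, h2, _⟩ <;> subst h1 <;> simp_all

namespace MobiusPlane

variable {P : Type*} [DecidableEq P] (M : MobiusPlane P)

lemma circle_nonempty {z : Finset P} (hz : z ∈ M.circles) : z.Nonempty := by
  have := M.ax3.2 z hz
  exact Finset.card_pos.mp (by omega)

/-- Any two distinct points lie on a common circle. -/
lemma exists_circle_thru (A B : P) (hAB : A ≠ B) :
    ∃ z ∈ M.circles, A ∈ z ∧ B ∈ z := by
  obtain ⟨z, hz⟩ := M.ax3.1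
  have step : ∀ z ∈ M.circles, ∀ A B : P, A ≠ B → A ∈ z →
      ∃ z' ∈ M.circles, A ∈ z' ∧ B ∈ z' := by
    intro z hz A B hAB hA
    by_cases hB : B ∈ z
    · exact ⟨z, hz, hA, hB⟩
    · obtain ⟨z', ⟨hz', hA', hB', _⟩, _⟩ := M.ax2 z hz A hA B hB
      exact ⟨z', hz', hA', hB'⟩
  by_cases hA : A ∈ z
  · exact step z hz A B hAB hA
  · obtain ⟨p, hp⟩ := M.circle_nonempty hz
    obtain ⟨z1, ⟨hz1, hp1, hA1, _⟩, _⟩ := M.ax2 z hz p hp A hA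
    exact step z1 hz1 A B hAB hA1

lemma adj_isLeft {u v : P ⊕ {z // z ∈ M.circles}} (h : M.incGraph.Adj u v) :
    u.isLeft = !v.isLeft := by
  rcases h with ⟨p, z, h1, h2, _⟩ | ⟨p, z, h1, h2, _⟩ <;> subst h1 <;> subst h2 <;> rfl

lemma walk_even_iff {u v : P ⊕ {z // z ∈ M.circles}} (w : M.incGraph.Walk u v) :
    Even w.length ↔ u.isLeft = v.isLeft := by
  induction w with
  | nil => simp
  | @cons a b c h w ih =>
    have hab := M.adj_isLeft h
    simp only [SimpleGraph.Walk.length_cons, Nat.even_add_one, ih, hab]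
    cases b.isLeft <;> cases c.isLeft <;> simp

lemma adj_inl_inr {p : P} {z : {z // z ∈ M.circles}} (hp : p ∈ z.1) :
    M.incGraph.Adj (Sum.inl p) (Sum.inr z) :=
  Or.inl ⟨p, z, rfl, rfl, hp⟩

lemma mem_of_adj {p : P} {z : {z // z ∈ M.circles}}
    (h : M.incGraph.Adj (Sum.inl p) (Sum.inr z)) : p ∈ z.1 := by
  rcases h with ⟨p', z', h1, h2, h3⟩ | ⟨p', z', h1, h2, h3⟩
  · obtain rfl := Sum.inl.inj h1
    obtain rfl := Sum.inr.inj h2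
    exact h3
  · exact absurd h1 (by simp)

lemma adj_inr_elim {z : {z // z ∈ M.circles}} {x : P ⊕ {z // z ∈ M.circles}}
    (h : M.incGraph.Adj (Sum.inr z) x) : ∃ m, x = Sum.inl m ∧ m ∈ z.1 := by
  rcases h with ⟨p', z', h1, h2, h3⟩ | ⟨p', z', h1, h2, h3⟩
  · exact absurd h1 (by simp)
  · obtain rfl := Sum.inr.inj h1
    exact ⟨p', h2, h3⟩

end MobiusPlane


open SimpleGraph MobiusPlane

/-- Distances in the point–circle incidence graph of a Möbius plane of order `q`:
two distinct points are at distance 2; a point and a circle are at distance 1 or 3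
according to incidence; two distinct circles are at distance 2 if they meet and 4
if they are disjoint. -/

theorem incGraph_distances {P : Type*} [DecidableEq P] [Fintype P]
    (M : MobiusPlane P) (q : ℕ) (h : M.HasOrder q) :
    (∀ p₁ p₂ : P, p₁ ≠ p₂ →
      M.incGraph.dist (Sum.inl p₁) (Sum.inl p₂) = 2) ∧
    (∀ (p : P) (z : {z // z ∈ M.circles}),
      (p ∈ z.1 → M.incGraph.dist (Sum.inl p) (Sum.inr z) = 1) ∧
      (p ∉ z.1 → M.incGraph.dist (Sum.inl p) (Sum.inr z) = 3)) ∧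
    (∀ z₁ z₂ : {z // z ∈ M.circles}, z₁ ≠ z₂ →
      ((z₁.1 ∩ z₂.1).Nonempty → M.incGraph.dist (Sum.inr z₁) (Sum.inr z₂) = 2) ∧
      (z₁.1 ∩ z₂.1 = ∅ → M.incGraph.dist (Sum.inr z₁) (Sum.inr z₂) = 4)) := by
  refine ⟨?_, ?_, ?_⟩
  · -- distinct points
    intro p₁ p₂ hne
    obtain ⟨z, hz, h1, h2⟩ := M.exists_circle_thru p₁ p₂ hne
    obtain ⟨w, hwlen⟩ : ∃ w : M.incGraph.Walk (Sum.inl p₁) (Sum.inl p₂), w.length = 2 :=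
      ⟨Walk.cons (M.adj_inl_inr (z := ⟨z, hz⟩) h1)
        (Walk.cons (M.incGraph.adj_symm (M.adj_inl_inr (z := ⟨z, hz⟩) h2)) Walk.nil), rfl⟩
    have hle : M.incGraph.dist (Sum.inl p₁) (Sum.inl p₂) ≤ 2 := hwlen ▸ dist_le w
    have hne0 : M.incGraph.dist (Sum.inl p₁) (Sum.inl p₂) ≠ 0 :=
      dist_ne_zero_iff_ne_and_reachable.mpr ⟨by simpa using hne, ⟨w⟩⟩
    obtain ⟨w', hw'⟩ := exists_walk_of_dist_ne_zero hne0
    have hev : Even w'.length := (M.walk_even_iff w').mpr rfl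
    obtain ⟨k, hk⟩ := hev
    omega
  · -- point and circle
    intro p z
    constructor
    · intro hp
      exact dist_eq_one_iff_adj.mpr (M.adj_inl_inr hp)
    · intro hp
      obtain ⟨r, hr⟩ := M.circle_nonempty z.2
      have hrp : p ≠ r := fun e => hp (e ▸ hr)
      obtain ⟨z', hz', hp', hr'⟩ := M.exists_circle_thru p r hrp
      obtain ⟨w, hwlen⟩ : ∃ w : M.incGraph.Walk (Sum.inl p) (Sum.inr z), w.length = 3 :=
        ⟨Walk.cons (M.adj_inl_inr (z := ⟨z', hz'⟩) hp')
          (Walk.cons (M.incGraph.adj_symm (M.adj_inl_inr (z := ⟨z', hz'⟩) hr'))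
            (Walk.cons (M.adj_inl_inr hr) Walk.nil)), rfl⟩
      have hle : M.incGraph.dist (Sum.inl p) (Sum.inr z) ≤ 3 := hwlen ▸ dist_le w
      have hne0 : M.incGraph.dist (Sum.inl p) (Sum.inr z) ≠ 0 :=
        dist_ne_zero_iff_ne_and_reachable.mpr ⟨by simp, ⟨w⟩⟩
      have hne1 : M.incGraph.dist (Sum.inl p) (Sum.inr z) ≠ 1 := by
        intro h1
        exact hp (M.mem_of_adj (dist_eq_one_iff_adj.mp h1))
      obtain ⟨w', hw'⟩ := exists_walk_of_dist_ne_zero hne0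
      have hod : ¬ Even w'.length := by
        rw [M.walk_even_iff w']; simp
      rw [Nat.not_even_iff_odd] at hod
      obtain ⟨k, hk⟩ := hod
      omega
  · -- two circles
    intro z₁ z₂ hne
    have hne' : (Sum.inr z₁ : P ⊕ {z // z ∈ M.circles}) ≠ Sum.inr z₂ := by
      simpa using hne
    constructor
    · intro ⟨m, hm⟩
      rw [Finset.mem_inter] at hm
      obtain ⟨w, hwlen⟩ : ∃ w : M.incGraph.Walk (Sum.inr z₁) (Sum.inr z₂), w.length = 2 :=
        ⟨Walk.cons (M.incGraph.adj_symm (M.adj_inl_inr hm.1))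
          (Walk.cons (M.adj_inl_inr hm.2) Walk.nil), rfl⟩
      have hle : M.incGraph.dist (Sum.inr z₁) (Sum.inr z₂) ≤ 2 := hwlen ▸ dist_le w
      have hne0 : M.incGraph.dist (Sum.inr z₁) (Sum.inr z₂) ≠ 0 :=
        dist_ne_zero_iff_ne_and_reachable.mpr ⟨hne', ⟨w⟩⟩
      obtain ⟨w', hw'⟩ := exists_walk_of_dist_ne_zero hne0
      have hev : Even w'.length := (M.walk_even_iff w').mpr rfl
      obtain ⟨k, hk⟩ := hev
      omega
    · intro hdisj
      obtain ⟨p, hp⟩ := M.circle_nonempty z₁.2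
      obtain ⟨r, hr⟩ := M.circle_nonempty z₂.2
      have hpr : p ≠ r := by
        intro e
        have : p ∈ z₁.1 ∩ z₂.1 := Finset.mem_inter.mpr ⟨hp, e ▸ hr⟩
        rw [hdisj] at this; exact absurd this (Finset.notMem_empty p)
      obtain ⟨z', hz', hp', hr'⟩ := M.exists_circle_thru p r hpr
      obtain ⟨w, hwlen⟩ : ∃ w : M.incGraph.Walk (Sum.inr z₁) (Sum.inr z₂), w.length = 4 :=
        ⟨Walk.cons (M.incGraph.adj_symm (M.adj_inl_inr hp))
          (Walk.cons (M.adj_inl_inr (z := ⟨z', hz'⟩) hp')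
            (Walk.cons (M.incGraph.adj_symm (M.adj_inl_inr (z := ⟨z', hz'⟩) hr'))
              (Walk.cons (M.adj_inl_inr hr) Walk.nil))), rfl⟩
      have hle : M.incGraph.dist (Sum.inr z₁) (Sum.inr z₂) ≤ 4 := hwlen ▸ dist_le w
      have hne0 : M.incGraph.dist (Sum.inr z₁) (Sum.inr z₂) ≠ 0 :=
        dist_ne_zero_iff_ne_and_reachable.mpr ⟨hne', ⟨w⟩⟩
      have hne2 : M.incGraph.dist (Sum.inr z₁) (Sum.inr z₂) ≠ 2 := by
        intro h2
        obtain ⟨w', hw'⟩ := exists_walk_of_dist_ne_zero hne0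
        rw [h2] at hw'
        cases w' with
        | nil => simp at hw'
        | cons ha wtl =>
          cases wtl with
          | nil => simp at hw'
          | cons hb wtl2 =>
            cases wtl2 with
            | nil =>
              obtain ⟨m, rfl, hm1⟩ := M.adj_inr_elim ha
              have hm2 : m ∈ z₂.1 := M.mem_of_adj hb
              have : m ∈ z₁.1 ∩ z₂.1 := Finset.mem_inter.mpr ⟨hm1, hm2⟩
              rw [hdisj] at this; exact absurd this (Finset.notMem_empty m)
            | cons hc wtl3 => simp at hw'
      obtain ⟨w', hw'⟩ := exists_walk_of_dist_ne_zero hne0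
      have hev : Even w'.length := (M.walk_even_iff w').mpr rfl
      obtain ⟨k, hk⟩ := hev
      omega
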